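/- Let α > 0, α ≠ 1, α ≠ 2. Then there do not exist three distinct positive reals λ₀ > λ₁ > λ₂ > 0 and constants μ, ν with α λ_k^{α−1} + μ + 2ν λ_k = 0 for all k = 0,1,2. Equivalently, for 0 < y < x < 1 and α ≥ 0, α ≠ 2, the equality (1 − x^{α−1})/(1 − x) = (1 − y^{α−1})/(1 − y) is impossible, since f(x) = (1 − x^{α−1})/(1 − x) is injective on (0,1). -/

import Mathlib

open Set Real

lemma aux_convex_no_three {f : ℝ → ℝ} (hf : StrictConvexOn ℝ (Ioi 0) f)
    {l0 l1 l2 : ℝ} (h2 : 0 < l2) (h21 : l2 < l1) (h10 : l1 < l0)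
    (e0 : f l0 = 0) (e1 : f l1 = 0) (e2 : f l2 = 0) : False := by
  set a : ℝ := (l0 - l1) / (l0 - l2) with ha_def
  set b : ℝ := (l1 - l2) / (l0 - l2) with hb_def
  have hd : 0 < l0 - l2 := by linarith
  have ha : 0 < a := div_pos (by linarith) hd
  have hb : 0 < b := div_pos (by linarith) hd
  have hab : a + b = 1 := by
    rw [ha_def, hb_def, ← add_div, div_eq_one_iff_eq hd.ne']
    ring
  have hl1 : a • l2 + b • l0 = l1 := by
    simp only [smul_eq_mul, ha_def, hb_def]
    field_simp
    ring
  have key := hf.2 (mem_Ioi.2 h2) (mem_Ioi.2 (h2.trans (h21.trans h10)))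
    (by linarith : l2 ≠ l0) ha hb hab
  rw [hl1, e0, e1, e2] at key
  simp at key

theorem no_three_distinct_tsallis_critical_points
    (α : ℝ) (hα0 : 0 < α) (hα1 : α ≠ 1) (hα2 : α ≠ 2) :
    ¬ ∃ (μ ν l0 l1 l2 : ℝ), 0 < l2 ∧ l2 < l1 ∧ l1 < l0 ∧
      (α * l0 ^ (α - 1) + μ + 2 * ν * l0 = 0) ∧
      (α * l1 ^ (α - 1) + μ + 2 * ν * l1 = 0) ∧
      (α * l2 ^ (α - 1) + μ + 2 * ν * l2 = 0) := by
  rintro ⟨μ, ν, l0, l1, l2, h2, h21, h10, e0, e1, e2⟩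
  set f : ℝ → ℝ := fun x => α * x ^ (α - 1) + μ + 2 * ν * x with hf_def
  have hderiv : ∀ x ∈ Ioi (0:ℝ), HasDerivAt f (α * ((α - 1) * x ^ (α - 2)) + 2 * ν) x := by
    intro x hx
    have h1 : HasDerivAt (fun x : ℝ => x ^ (α - 1)) ((α - 1) * x ^ (α - 1 - 1)) x :=
      Real.hasDerivAt_rpow_const (Or.inl (ne_of_gt hx))
    have hlin : HasDerivAt (fun x : ℝ => 2 * ν * x) (2 * ν) x := by
      simpa using (hasDerivAt_id x).const_mul (2 * ν)
    have h4 : α - 1 - 1 = α - 2 := by ring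
    rw [h4] at h1
    exact ((h1.const_mul α).add_const μ).add hlin
  have hdf : Set.EqOn (deriv f) (fun x => α * ((α - 1) * x ^ (α - 2)) + 2 * ν) (Ioi 0) :=
    fun x hx => (hderiv x hx).deriv
  have hderiv2 : ∀ x ∈ Ioi (0:ℝ),
      deriv (deriv f) x = α * ((α - 1) * ((α - 2) * x ^ (α - 3))) := by
    intro x hx
    have hev : deriv f =ᶠ[nhds x] fun x => α * ((α - 1) * x ^ (α - 2)) + 2 * ν :=
      Filter.eventuallyEq_of_mem (isOpen_Ioi.mem_nhds hx) hdf
    rw [hev.deriv_eq]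
    have h1 : HasDerivAt (fun x : ℝ => x ^ (α - 2)) ((α - 2) * x ^ (α - 2 - 1)) x :=
      Real.hasDerivAt_rpow_const (Or.inl (ne_of_gt hx))
    have h3 : α - 2 - 1 = α - 3 := by ring
    rw [h3] at h1
    exact (((h1.const_mul (α - 1)).const_mul α).add_const (2 * ν)).deriv
  have hcont : ContinuousOn f (Ioi 0) :=
    fun x hx => ((hderiv x hx).continuousAt).continuousWithinAt
  have hd2 : ∀ x : ℝ, deriv^[2] f x = deriv (deriv f) x := fun x => rfl
  rcases lt_or_gt_of_ne hα1 with h1 | h1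
  · have hconv : StrictConvexOn ℝ (Ioi 0) f := by
      apply strictConvexOn_of_deriv2_pos (convex_Ioi 0) hcont
      intro x hx
      rw [interior_Ioi] at hx
      rw [hd2, hderiv2 x hx]
      have hp := Real.rpow_pos_of_pos hx (α - 3)
      have h2' : α - 2 < 0 := by linarith
      have h1' : α - 1 < 0 := by linarith
      exact mul_pos hα0 (mul_pos_of_neg_of_neg h1' (mul_neg_of_neg_of_pos h2' hp))
    exact aux_convex_no_three hconv h2 h21 h10 e0 e1 e2
  · rcases lt_or_gt_of_ne hα2 with h2' | h2'
    · have hconc : StrictConcaveOn ℝ (Ioi 0) f := by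
        apply strictConcaveOn_of_deriv2_neg (convex_Ioi 0) hcont
        intro x hx
        rw [interior_Ioi] at hx
        rw [hd2, hderiv2 x hx]
        have hp := Real.rpow_pos_of_pos hx (α - 3)
        have ha1 : 0 < α - 1 := by linarith
        have ha2 : α - 2 < 0 := by linarith
        exact mul_neg_of_pos_of_neg hα0 (mul_neg_of_pos_of_neg ha1 (mul_neg_of_neg_of_pos ha2 hp))
      have hneg : StrictConvexOn ℝ (Ioi 0) (fun x => -(f x)) := hconc.neg
      exact aux_convex_no_three hneg h2 h21 h10
        (by simp only [neg_eq_zero]; exact e0)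
        (by simp only [neg_eq_zero]; exact e1)
        (by simp only [neg_eq_zero]; exact e2)
    · have hconv : StrictConvexOn ℝ (Ioi 0) f := by
        apply strictConvexOn_of_deriv2_pos (convex_Ioi 0) hcont
        intro x hx
        rw [interior_Ioi] at hx
        rw [hd2, hderiv2 x hx]
        have hp := Real.rpow_pos_of_pos hx (α - 3)
        have ha1 : 0 < α - 1 := by linarith
        have ha2 : 0 < α - 2 := by linarith
        exact mul_pos hα0 (mul_pos ha1 (mul_pos ha2 hp))
      exact aux_convex_no_three hconv h2 h21 h10 e0 e1 e2
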